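/- For every digraph D, the set P = {p ∈ ℝ : p ≥ 1 and D admits an acyclic p-colouring} is a closed subset of ℝ. Consequently, every loopless digraph D admits an acyclic χ⃗*(D)-colouring, i.e. the infimum defining χ⃗*(D) is attained. -/

import Mathlib

open Finset

variable {V : Type*}

/-- `v :: l` forms a directed cycle of the digraph with arc relation `E`:
the vertices are pairwise distinct and each one has an arc to the next, cyclically. -/
def IsDicycle (E : V → V → Prop) (v : V) (l : List V) : Prop :=
  (v :: l).Nodup ∧ List.Chain E v (l ++ [v])

/-- The vertex set `A` induces an acyclic subdigraph of the digraph `E`: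
no directed cycle of `E` has all of its vertices in `A`. -/
def AcyclicOn (E : V → V → Prop) (A : Set V) : Prop :=
  ∀ v l, IsDicycle E v l → ¬ (∀ x ∈ v :: l, x ∈ A)

/-- The open arc of length 1 in `ℝ/pℤ` starting at (the image of) `a`. -/
def unitArc (p a : ℝ) : Set (AddCircle p) :=
  (fun x : ℝ => (x : AddCircle p)) '' Set.Ioo a (a + 1)

/-- An acyclic `p`-colouring of the digraph `E` : the preimage of every open arc
of length 1 induces an acyclic subdigraph. -/
def IsAcyclicColouring (E : V → V → Prop) (p : ℝ) (c : V → AddCircle p) : Prop :=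
  ∀ a : ℝ, AcyclicOn E (c ⁻¹' unitArc p a)

/-- The star dichromatic number of a digraph. -/
noncomputable def starDichromatic (E : V → V → Prop) : ℝ :=
  sInf {p : ℝ | 1 ≤ p ∧ ∃ c : V → AddCircle p, IsAcyclicColouring E p c}

/-- A weak circular `p`-colouring in the sense of Bokal et al. -/
def IsWeakCircularColouring (E : V → V → Prop) (p : ℝ) (c : V → AddCircle p) : Prop :=
  (∀ u w, E u w → c u = c w ∨
    ∃ r : ℝ, r ∈ Set.Ico (0 : ℝ) p ∧ (r : AddCircle p) = c w - c u ∧ 1 ≤ r) ∧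
  ∀ t : AddCircle p, AcyclicOn E (c ⁻¹' {t})

/-- The circular dichromatic number of a digraph. -/
noncomputable def circularDichromatic (E : V → V → Prop) : ℝ :=
  sInf {p : ℝ | 1 ≤ p ∧ ∃ c : V → AddCircle p, IsWeakCircularColouring E p c}

/-- The fractional dichromatic number: the optimal value of the covering linear
program over the acyclic vertex subsets. -/
noncomputable def fracDichromatic [Fintype V] [DecidableEq V] (E : V → V → Prop) : ℝ :=
  sInf {r : ℝ | ∃ x : Finset V → ℝ, (∀ A, 0 ≤ x A) ∧
    (∀ A : Finset V, x A ≠ 0 → AcyclicOn E ↑A) ∧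
    (∀ v : V, 1 ≤ ∑ A ∈ Finset.univ.filter (fun A : Finset V => v ∈ A), x A) ∧
    r = ∑ A : Finset V, x A}

/-- The cyclic interval `{i, i+1, ..., i+d-1}` in `ℤ/kℤ`. -/
def cycInterval (k : ℕ) (i : ZMod k) (d : ℕ) : Set (ZMod k) :=
  {j : ZMod k | ∃ t : ℕ, t < d ∧ j = i + (t : ZMod k)}

/-- An acyclic `(k,d)`-colouring of the digraph `E`. -/
def IsAcyclicKDColouring (E : V → V → Prop) (k d : ℕ) (c : V → ZMod k) : Prop :=
  ∀ i : ZMod k, AcyclicOn E (c ⁻¹' cycInterval k i d)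

/-- The dichromatic number: the least `k` such that the vertex set can be partitioned
into `k` classes each inducing an acyclic subdigraph. -/
noncomputable def dichromatic (E : V → V → Prop) : ℕ :=
  sInf {k : ℕ | ∃ c : V → Fin k, ∀ i : Fin k, AcyclicOn E (c ⁻¹' {i})}

/-- `v :: l` forms a cycle of the simple graph `G` (of length at least 3). -/
def IsGraphCycle (G : SimpleGraph V) (v : V) (l : List V) : Prop :=
  3 ≤ (v :: l).length ∧ (v :: l).Nodup ∧ List.Chain G.Adj v (l ++ [v])

/-- The vertex set `A` induces a forest (acyclic subgraph) in the simple graph `G`. -/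
def ForestOn (G : SimpleGraph V) (A : Set V) : Prop :=
  ∀ v l, IsGraphCycle G v l → ¬ (∀ x ∈ v :: l, x ∈ A)

/-- A `(k,d)`-tree-colouring of a graph. -/
def IsTreeColouring (G : SimpleGraph V) (k d : ℕ) (c : V → ZMod k) : Prop :=
  ∀ i : ZMod k, ForestOn G (c ⁻¹' cycInterval k i d)

/-- The circular vertex arboricity of a graph. -/
noncomputable def circularVertexArboricity (G : SimpleGraph V) : ℝ :=
  sInf {r : ℝ | ∃ k d : ℕ, 1 ≤ d ∧ d ≤ k ∧
    (∃ c : V → ZMod k, IsTreeColouring G k d c) ∧ r = (k : ℝ) / d}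

/-- `E` is an orientation of the simple graph `G`: for each edge exactly one of the
two possible arcs is present, and there are no other arcs. -/
def IsOrientation (G : SimpleGraph V) (E : V → V → Prop) : Prop :=
  ∀ u w, ((E u w ∨ E w u) ↔ G.Adj u w) ∧ ¬ (E u w ∧ E w u)

/-- The star dichromatic number of a graph: the maximum over all orientations. -/
noncomputable def starDichromaticGraph (G : SimpleGraph V) : ℝ :=
  sSup {r : ℝ | ∃ E : V → V → Prop, IsOrientation G E ∧ r = starDichromatic E}

/-- The fractional dichromatic number of a graph: the maximum over all orientations. -/
noncomputable def fracDichromaticGraph [Fintype V] [DecidableEq V] (G : SimpleGraph V) : ℝ :=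
  sSup {r : ℝ | ∃ E : V → V → Prop, IsOrientation G E ∧ r = fracDichromatic E}

/-- The fractional chromatic number of a graph: the optimal value of the covering
linear program over the independent vertex subsets. -/
noncomputable def fractionalChromatic [Fintype V] [DecidableEq V] (G : SimpleGraph V) : ℝ :=
  sInf {r : ℝ | ∃ x : Finset V → ℝ, (∀ A, 0 ≤ x A) ∧
    (∀ A : Finset V, x A ≠ 0 → ∀ u ∈ A, ∀ w ∈ A, ¬ G.Adj u w) ∧
    (∀ v : V, 1 ≤ ∑ A ∈ Finset.univ.filter (fun A : Finset V => v ∈ A), x A) ∧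
    r = ∑ A : Finset V, x A}

/-- A `(k,d)`-colouring of a graph in the sense of Vince: colours of adjacent vertices
have circular `k`-distance at least `d`. -/
def IsVinceColouring (G : SimpleGraph V) (k d : ℕ) (c : V → ZMod k) : Prop :=
  ∀ u w, G.Adj u w → d ≤ (c u - c w).val ∧ d ≤ (c w - c u).val

/-- Vince's star (circular) chromatic number of a graph. -/
noncomputable def starChromatic (G : SimpleGraph V) : ℝ :=
  sInf {r : ℝ | ∃ k d : ℕ, 1 ≤ d ∧ d ≤ k ∧
    (∃ c : V → ZMod k, IsVinceColouring G k d c) ∧ r = (k : ℝ) / d}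

/-- The circulant digraph `C⃗(k,d)` on `ℤ/kℤ`: each vertex `i` has the outgoing arcs
`(i, i+d), (i, i+d+1), …, (i, i+k-1)`. -/
def circulantDigraph (k d : ℕ) : ZMod k → ZMod k → Prop :=
  fun i j => ∃ t : ℕ, d ≤ t ∧ t < k ∧ j = i + (t : ZMod k)

/-- The directed cycle `C⃗_n` on `ℤ/nℤ`. -/
def dirCycle (n : ℕ) : ZMod n → ZMod n → Prop :=
  fun i j => j = i + 1

/-- The digraph `D^s` obtained from `D` by adding a dominating source `none`. -/
def addSource (E : V → V → Prop) : Option V → Option V → Prop :=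
  fun a b => match a, b with
  | none, some _ => True
  | some u, some w => E u w
  | _, none => False

/-- The wheel graph `W_k`: a cycle on `ℤ/kℤ` together with a hub `none` adjacent to
every cycle vertex. -/
def wheelGraph (k : ℕ) : SimpleGraph (Option (ZMod k)) :=
  SimpleGraph.fromRel (fun a b => match a, b with
    | none, some _ => True
    | some i, some j => j = i + 1
    | _, none => False)
section StarAux

open Filter Topology

lemma coe_eq_coe_iff' {p x y : ℝ} :
    (x : AddCircle p) = (y : AddCircle p) ↔ ∃ k : ℤ, y = x + k * p := by
  constructor
  · intro h
    obtain ⟨k, hk⟩ := AddSubgroup.mem_zmultiples_iff.mp (QuotientAddGroup.eq.mp h)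
    refine ⟨k, ?_⟩
    have hk' : (k : ℝ) * p = -x + y := by rw [← hk]; simp [zsmul_eq_mul]
    linarith
  · rintro ⟨k, rfl⟩
    exact QuotientAddGroup.eq.mpr (AddSubgroup.mem_zmultiples_iff.mpr ⟨k, by rw [zsmul_eq_mul]; ring⟩)

lemma exists_rep' {p : ℝ} (hp : 0 < p) (z : AddCircle p) :
    ∃ x : ℝ, 0 ≤ x ∧ x < p ∧ (x : AddCircle p) = z := by
  obtain ⟨x₀, rfl⟩ := QuotientAddGroup.mk_surjective z
  refine ⟨x₀ - ⌊x₀ / p⌋ * p, Int.sub_floor_div_mul_nonneg x₀ hp, Int.sub_floor_div_mul_lt x₀ hp, ?_⟩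
  exact coe_eq_coe_iff'.mpr ⟨⌊x₀ / p⌋, by ring⟩

lemma mem_unitArc' {p a : ℝ} {z : AddCircle p} :
    z ∈ unitArc p a ↔ ∃ y : ℝ, (a < y ∧ y < a + 1) ∧ (y : AddCircle p) = z := by
  constructor
  · rintro ⟨y, hy, rfl⟩; exact ⟨y, ⟨hy.1, hy.2⟩, rfl⟩
  · rintro ⟨y, hy, rfl⟩; exact ⟨y, ⟨hy.1, hy.2⟩, rfl⟩

lemma acyclicOn_of_subsingleton {E : V → V → Prop} (hE : ∀ v, ¬ E v v) {A : Set V}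
    (hA : A.Subsingleton) : AcyclicOn E A := by
  rintro v l ⟨hnd, hch⟩ hall
  have hl : l = [] := by
    cases l with
    | nil => rfl
    | cons w t =>
      exfalso
      have hwv : w = v := hA (hall w (by simp)) (hall v (by simp))
      have : v ∉ w :: t := (List.nodup_cons.mp hnd).1
      exact this (by rw [hwv]; simp)
  subst hl
  simp only [List.nil_append, List.chain_cons, List.Chain.nil, and_true] at hch
  exact hE v (by simpa [List.Chain] using hch)

lemma colouring_mono {E : V → V → Prop} {p q : ℝ} (hp : 1 ≤ p) (hpq : p ≤ q)
    (h : ∃ c : V → AddCircle p, IsAcyclicColouring E p c) :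
    ∃ c : V → AddCircle q, IsAcyclicColouring E q c := by
  obtain ⟨c, hc⟩ := h
  have hp0 : (0 : ℝ) < p := by linarith
  have hq0 : (0 : ℝ) < q := by linarith
  choose r hr0 hrp hrc using fun v => exists_rep' hp0 (c v)
  refine ⟨fun v => ((q / p * r v : ℝ) : AddCircle q), ?_⟩
  intro a v l hcyc hall
  refine hc (p / q * a) v l hcyc ?_
  intro x hx
  obtain ⟨y, ⟨hy1, hy2⟩, hy3⟩ := mem_unitArc'.mp (hall x hx)
  obtain ⟨k, hk⟩ := coe_eq_coe_iff'.mp hy3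
  -- hk : q / p * r x = y + k * q
  have hrx : r x = p / q * y + k * p := by
    have hp' : p ≠ 0 := ne_of_gt hp0
    have hq' : q ≠ 0 := ne_of_gt hq0
    field_simp at hk ⊢
    nlinarith [hk]
  rw [Set.mem_preimage, ← hrc x]
  refine mem_unitArc'.mpr ⟨p / q * y, ⟨?_, ?_⟩, ?_⟩
  · exact mul_lt_mul_of_pos_left hy1 (by positivity)
  · have h1 : p / q * y < p / q * (a + 1) := mul_lt_mul_of_pos_left hy2 (by positivity)
    have h2 : p / q ≤ 1 := (div_le_one hq0).mpr hpq
    nlinarith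
  · exact coe_eq_coe_iff'.mpr ⟨k, hrx⟩

lemma exists_base_colouring {E : V → V → Prop} [Fintype V] [Nonempty V] (hE : ∀ v, ¬ E v v) :
    1 ≤ (Fintype.card V : ℝ) ∧
      ∃ c : V → AddCircle (Fintype.card V : ℝ),
        IsAcyclicColouring E (Fintype.card V : ℝ) c := by
  have hn : 1 ≤ Fintype.card V := Fintype.card_pos
  have hn' : (1 : ℝ) ≤ (Fintype.card V : ℝ) := by exact_mod_cast hn
  refine ⟨hn', ⟨fun v => (((Fintype.equivFin V v : ℕ) : ℝ) : AddCircle (Fintype.card V : ℝ)), ?_⟩⟩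
  intro a
  apply acyclicOn_of_subsingleton hE
  intro u hu w hw
  obtain ⟨y, ⟨hy1, hy2⟩, hy3⟩ := mem_unitArc'.mp hu
  obtain ⟨z, ⟨hz1, hz2⟩, hz3⟩ := mem_unitArc'.mp hw
  obtain ⟨j, hj⟩ := coe_eq_coe_iff'.mp hy3
  obtain ⟨i, hi⟩ := coe_eq_coe_iff'.mp hz3
  have hiu_lt : ((Fintype.equivFin V u : ℕ) : ℤ) < (Fintype.card V : ℤ) := by
    exact_mod_cast (Fintype.equivFin V u).isLt
  have hiw_lt : ((Fintype.equivFin V w : ℕ) : ℤ) < (Fintype.card V : ℤ) := by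
    exact_mod_cast (Fintype.equivFin V w).isLt
  have hiu_nn : (0 : ℤ) ≤ ((Fintype.equivFin V u : ℕ) : ℤ) := Int.natCast_nonneg _
  have hiw_nn : (0 : ℤ) ≤ ((Fintype.equivFin V w : ℕ) : ℤ) := Int.natCast_nonneg _
  have hd0 : ((Fintype.equivFin V u : ℕ) : ℤ) - ((Fintype.equivFin V w : ℕ) : ℤ)
      - (j - i) * (Fintype.card V : ℤ) = 0 := by
    apply Int.abs_lt_one_iff.mp
    have habs : |((((Fintype.equivFin V u : ℕ) : ℤ) - ((Fintype.equivFin V w : ℕ) : ℤ)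
        - (j - i) * (Fintype.card V : ℤ) : ℤ) : ℝ)| < 1 := by
      push_cast
      rw [abs_lt]
      constructor <;> nlinarith [hj, hi]
    exact_mod_cast habs
  have hdvd : ((Fintype.card V : ℤ)) ∣
      (((Fintype.equivFin V u : ℕ) : ℤ) - ((Fintype.equivFin V w : ℕ) : ℤ)) :=
    ⟨j - i, by linarith⟩
  have heq0 := Int.eq_zero_of_abs_lt_dvd hdvd
    (by rw [abs_lt]; constructor <;> linarith)
  have heq : (Fintype.equivFin V u : ℕ) = (Fintype.equivFin V w : ℕ) := by omega
  exact (Fintype.equivFin V).injective (Fin.ext heq)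

lemma sInf_mem_colouring (E : V → V → Prop) [Fintype V] [Nonempty V]
    (hne : {p : ℝ | 1 ≤ p ∧ ∃ c : V → AddCircle p, IsAcyclicColouring E p c}.Nonempty) :
    sInf {p : ℝ | 1 ≤ p ∧ ∃ c : V → AddCircle p, IsAcyclicColouring E p c} ∈
      {p : ℝ | 1 ≤ p ∧ ∃ c : V → AddCircle p, IsAcyclicColouring E p c} := by
  classical
  set P := {p : ℝ | 1 ≤ p ∧ ∃ c : V → AddCircle p, IsAcyclicColouring E p c} with hPdef
  have hbdd : BddBelow P := ⟨1, fun p hp => hp.1⟩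
  set m := sInf P with hmdef
  have hm1 : (1 : ℝ) ≤ m := le_csInf hne fun p hp => hp.1
  have hm0 : (0 : ℝ) < m := by linarith
  -- a sequence in P converging to m
  have hseq : ∀ n : ℕ, ∃ p ∈ P, p < m + 1 / (n + 1) := fun n =>
    Real.lt_sInf_add_pos hne (by positivity)
  choose pseq hmem hlt using hseq
  have hge : ∀ n, m ≤ pseq n := fun n => csInf_le hbdd (hmem n)
  have hple : ∀ n, pseq n ≤ m + 1 := by
    intro n
    have h1 : 1 / ((n : ℝ) + 1) ≤ 1 := by
      rw [div_le_one (by positivity)]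
      linarith [Nat.cast_nonneg (α := ℝ) n]
    linarith [hlt n]
  have hptend : Tendsto pseq atTop (𝓝 m) := by
    apply tendsto_of_tendsto_of_tendsto_of_le_of_le (g := fun _ => m)
      (h := fun n : ℕ => m + 1 / (n + 1)) tendsto_const_nhds
    · have : Tendsto (fun n : ℕ => 1 / ((n : ℝ) + 1)) atTop (𝓝 0) :=
        tendsto_one_div_add_atTop_nhds_zero_nat
      simpa using tendsto_const_nhds.add this
    · exact hge
    · exact fun n => le_of_lt (hlt n)
  have hppos : ∀ n, (0 : ℝ) < pseq n := fun n => lt_of_lt_of_le hm0 (hge n)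
  choose cseq hcseq using fun n => (hmem n).2
  choose xr hxr0 hxrlt hxrcoe using fun n v => exists_rep' (hppos n) (cseq n v)
  -- compactness
  have hS : IsCompact (Set.univ.pi fun _ : V => Set.Icc (0 : ℝ) (m + 1)) :=
    isCompact_univ_pi fun _ => isCompact_Icc
  have hxS : ∀ n, xr n ∈ Set.univ.pi fun _ : V => Set.Icc (0 : ℝ) (m + 1) := by
    intro n v _
    exact ⟨hxr0 n v, le_trans (le_of_lt (hxrlt n v)) (hple n)⟩
  obtain ⟨X, _, φ, hφ, hconv⟩ := hS.tendsto_subseq hxS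
  refine ⟨hm1, fun v => ((X v : ℝ) : AddCircle m), ?_⟩
  intro a v l hcyc hall
  -- choose representatives in the arc for the limit colours
  set c : V → AddCircle m := fun v => ((X v : ℝ) : AddCircle m) with hcdef
  have hYex : ∀ w : V, ∃ y : ℝ, (a < y ∧ y < a + 1) ∧
      (c w ∈ unitArc m a → (y : AddCircle m) = c w) := by
    intro w
    by_cases h : c w ∈ unitArc m a
    · obtain ⟨y, hy, hyc⟩ := mem_unitArc'.mp h
      exact ⟨y, hy, fun _ => hyc⟩
    · exact ⟨a + 1 / 2, ⟨by linarith, by linarith⟩, fun h' => absurd h' h⟩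
  choose Y hY1 hY2 using hYex
  have hkex : ∀ w : V, ∃ k : ℤ, c w ∈ unitArc m a → X w = Y w + k * m := by
    intro w
    by_cases h : c w ∈ unitArc m a
    · obtain ⟨k, hk⟩ := coe_eq_coe_iff'.mp (hY2 w h)
      exact ⟨k, fun _ => hk⟩
    · exact ⟨0, fun h' => absurd h' h⟩
  choose kk hkk using hkex
  -- uniform slack
  have hune : (Finset.univ : Finset V).Nonempty := Finset.univ_nonempty
  set ε := Finset.univ.inf' hune fun w => min (Y w - a) (a + 1 - Y w) with hεdef
  have hε : 0 < ε := by
    rw [hεdef, Finset.lt_inf'_iff]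
    intro w _
    exact lt_min (by linarith [(hY1 w).1]) (by linarith [(hY1 w).2])
  have hεle : ∀ w : V, ε ≤ min (Y w - a) (a + 1 - Y w) := fun w => by
    rw [hεdef]
    exact Finset.inf'_le (fun w : V => min (Y w - a) (a + 1 - Y w)) (Finset.mem_univ w)
  set K := Finset.univ.sup' hune fun w => |(kk w : ℝ)| with hKdef
  have hKle : ∀ w : V, |(kk w : ℝ)| ≤ K := fun w => by
    rw [hKdef]
    exact Finset.le_sup' (fun w : V => |(kk w : ℝ)|) (Finset.mem_univ w)
  have hK0 : 0 ≤ K := le_trans (abs_nonneg _) (hKle (Classical.arbitrary V))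
  -- eventually close
  have hconv' := tendsto_pi_nhds.mp hconv
  have hev1 : ∀ᶠ n in atTop, ∀ w : V, |xr (φ n) w - X w| < ε / 2 := by
    rw [Filter.eventually_all]
    intro w
    exact (hconv' w).eventually (eventually_abs_sub_lt (X w) (by positivity))
  have hptend2 : Tendsto (fun n => pseq (φ n)) atTop (𝓝 m) :=
    hptend.comp hφ.tendsto_atTop
  have hev2 : ∀ᶠ n in atTop, |pseq (φ n) - m| < ε / (2 * (K + 1)) :=
    hptend2.eventually (eventually_abs_sub_lt m (div_pos hε (by linarith)))
  obtain ⟨N, hN1, hN2⟩ := (hev1.and hev2).exists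
  set p' := pseq (φ N) with hp'def
  -- the approximating colouring must contain the cycle in an arc: contradiction
  refine hcseq (φ N) a v l hcyc ?_
  intro w hw
  have hcw : c w ∈ unitArc m a := hall w hw
  have hXw : X w = Y w + kk w * m := hkk w hcw
  rw [Set.mem_preimage, ← hxrcoe (φ N) w]
  set y' := xr (φ N) w - kk w * p' with hy'def
  have hbound : |y' - Y w| < ε := by
    have h1 : |xr (φ N) w - X w| < ε / 2 := hN1 w
    have h2 : |p' - m| < ε / (2 * (K + 1)) := hN2
    have h3 : |(kk w : ℝ) * (m - p')| ≤ K * |p' - m| := by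
      rw [abs_mul, abs_sub_comm m p']
      exact mul_le_mul_of_nonneg_right (hKle w) (abs_nonneg _)
    have h4 : K * |p' - m| < ε / 2 := by
      have h5 : |p' - m| * (2 * (K + 1)) < ε := by
        rw [← lt_div_iff₀ (by linarith)]
        exact h2
      nlinarith [abs_nonneg (p' - m)]
    have h6 : y' - Y w = (xr (φ N) w - X w) + (kk w : ℝ) * (m - p') := by
      rw [hy'def, hXw]; ring
    calc |y' - Y w| ≤ |xr (φ N) w - X w| + |(kk w : ℝ) * (m - p')| := by
          rw [h6]; exact abs_add_le _ _
      _ < ε / 2 + ε / 2 := by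
          have := lt_of_le_of_lt h3 h4
          linarith
      _ = ε := by ring
  refine mem_unitArc'.mpr ⟨y', ⟨?_, ?_⟩, ?_⟩
  · have := abs_lt.mp hbound
    have := le_trans (hεle w) (min_le_left _ _)
    linarith [(le_trans (hεle w) (min_le_left (Y w - a) (a + 1 - Y w)))]
  · have := abs_lt.mp hbound
    linarith [(le_trans (hεle w) (min_le_right (Y w - a) (a + 1 - Y w)))]
  · exact coe_eq_coe_iff'.mpr ⟨kk w, by rw [hy'def]; ring⟩

end StarAux
/-- The set of `p ≥ 1` admitting an acyclic `p`-colouring is closed;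
consequently every loopless digraph admits an acyclic `χ⃗*(D)`-colouring. -/
theorem stmt0 {V : Type*} [Fintype V] [Nonempty V] (E : V → V → Prop) :
    IsClosed {p : ℝ | 1 ≤ p ∧ ∃ c : V → AddCircle p, IsAcyclicColouring E p c} ∧
    ((∀ v, ¬ E v v) →
      ∃ c : V → AddCircle (starDichromatic E),
        IsAcyclicColouring E (starDichromatic E) c) := by
  by_cases hloop : ∀ v, ¬ E v v
  · have hne : {p : ℝ | 1 ≤ p ∧ ∃ c : V → AddCircle p, IsAcyclicColouring E p c}.Nonempty :=
      ⟨(Fintype.card V : ℝ), (exists_base_colouring hloop).1, (exists_base_colouring hloop).2⟩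
    have hmem := sInf_mem_colouring E hne
    have hbdd : BddBelow {p : ℝ | 1 ≤ p ∧ ∃ c : V → AddCircle p, IsAcyclicColouring E p c} :=
      ⟨1, fun p hp => hp.1⟩
    constructor
    · have hIci : {p : ℝ | 1 ≤ p ∧ ∃ c : V → AddCircle p, IsAcyclicColouring E p c} =
          Set.Ici (sInf {p : ℝ | 1 ≤ p ∧ ∃ c : V → AddCircle p, IsAcyclicColouring E p c}) := by
        ext q
        constructor
        · exact fun hq => csInf_le hbdd hq
        · intro hq
          exact ⟨le_trans hmem.1 hq, colouring_mono hmem.1 hq hmem.2⟩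
      rw [hIci]
      exact isClosed_Ici
    · intro _
      exact hmem.2
  · push_neg at hloop
    obtain ⟨v, hv⟩ := hloop
    have hempty : {p : ℝ | 1 ≤ p ∧ ∃ c : V → AddCircle p, IsAcyclicColouring E p c} = ∅ := by
      rw [Set.eq_empty_iff_forall_notMem]
      rintro p ⟨hp1, c, hc⟩
      obtain ⟨x₀, _, _, hx₀⟩ := exists_rep' (by linarith : (0:ℝ) < p) (c v)
      refine hc (x₀ - 1/2) v [] ⟨by simp, by simp [List.Chain, hv]⟩ ?_
      intro x hx
      simp only [List.mem_singleton] at hx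
      subst hx
      exact mem_unitArc'.mpr ⟨x₀, ⟨by linarith, by linarith⟩, hx₀⟩
    constructor
    · rw [hempty]; exact isClosed_empty
    · intro h; exact absurd (h v) (by simp [hv])
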